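/- Let d : ℕ → ℝ be a sequence such that for every t ≥ 1 the t×t L-banded matrix with diagonal d_1,…,d_t is positive semidefinite. Then the sequence (d_t)_{t≥1} is monotonically decreasing, bounded below by 0, and converges to some limit d_* ≥ 0. -/

import Mathlib

open Matrix

lemma lband_aux (t : ℕ) (M : Matrix (Fin t) (Fin t) ℝ) (hM : M.PosSemidef) (a b : Fin t) :
    0 ≤ M a a - M a b - M b a + M b b := by
  have := hM.dotProduct_mulVec_nonneg (Pi.single a 1 - Pi.single b 1)
  simp [dotProduct, mulVec, Finset.mul_sum, sub_mul, mul_sub, Pi.single_apply,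
    Finset.sum_sub_distrib, mul_ite, ite_mul] at this
  linarith

/-- If for every `t ≥ 1` the `t × t` L-banded matrix with diagonal `d_1,…,d_t`
(`V_{i,j} = d_{max(i,j)}`, a matrix index `i : Fin t` corresponding to the
paper index `i.val + 1`) is positive semidefinite, then the sequence
`(d_t)_{t ≥ 1}` is monotonically decreasing, bounded below by `0`, and
converges to some limit `d_* ≥ 0`. -/
theorem lband_psd_seq_converges (d : ℕ → ℝ)
    (h : ∀ t : ℕ, 1 ≤ t →
      Matrix.PosSemidef (Matrix.of fun i j : Fin t => d (max i.val j.val + 1))) :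
    (∀ s t : ℕ, 1 ≤ s → s ≤ t → d t ≤ d s) ∧
    (∀ t : ℕ, 1 ≤ t → 0 ≤ d t) ∧
    ∃ dstar : ℝ, 0 ≤ dstar ∧ Filter.Tendsto d Filter.atTop (nhds dstar) := by
  have hnn : ∀ t : ℕ, 1 ≤ t → 0 ≤ d t := by
    intro t ht
    have := (h t ht).dotProduct_mulVec_nonneg (Pi.single (⟨t - 1, by omega⟩ : Fin t) 1)
    simpa [dotProduct, mulVec, Pi.single_apply, mul_ite, ite_mul,
      show t - 1 + 1 = t by omega] using this
  have hmono : ∀ s t : ℕ, 1 ≤ s → s ≤ t → d t ≤ d s := by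
    intro s t hs hst
    rcases eq_or_lt_of_le hst with rfl | hlt
    · exact le_refl _
    · have ht : 1 ≤ t := le_trans hs hst
      have key := lband_aux t _ (h t ht) ⟨s - 1, by omega⟩ ⟨t - 1, by omega⟩
      simp only [Matrix.of_apply] at key
      have h1 : max (s-1) (t-1) = t - 1 := by omega
      rw [max_self, max_self, h1, max_comm, h1] at key
      have hs1 : s - 1 + 1 = s := by omega
      have ht1 : t - 1 + 1 = t := by omega
      rw [hs1, ht1] at key
      linarith
  refine ⟨hmono, hnn, ?_⟩
  set e : ℕ → ℝ := fun n => d (n + 1) with he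
  have hea : Antitone e := antitone_nat_of_succ_le fun n => hmono (n + 1) (n + 2) (by omega) (by omega)
  have heb : BddBelow (Set.range e) := ⟨0, by rintro x ⟨n, rfl⟩; exact hnn (n + 1) (by omega)⟩
  have hte : Filter.Tendsto e Filter.atTop (nhds (⨅ n, e n)) :=
    tendsto_atTop_ciInf hea heb
  refine ⟨⨅ n, e n, le_ciInf fun n => hnn (n + 1) (by omega), ?_⟩
  rwa [← Filter.tendsto_add_atTop_iff_nat 1]
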